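/- Let S^{(0)} ∈ ℂ^{M×M} be a positive semidefinite matrix of rank K. Then the Hadamard product S^{(0)} ⊙ S^{(0)} ⊙ (S^{(0)})* is positive semidefinite and has rank at most K^2(K+1)/2. -/

import Mathlib

open Matrix
open scoped ComplexOrder

/-- Schur product theorem: the Hadamard product of two PSD complex matrices is PSD. -/
lemma aux_schur_psd {n : Type*} [Fintype n] [DecidableEq n] {A B : Matrix n n ℂ}
    (hA : A.PosSemidef) (hB : B.PosSemidef) : (Matrix.hadamard A B).PosSemidef := by
  exact hA.hadamard hB

/-- Expansion of a triple pointwise product of linear combinations. -/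
lemma aux_expand {M K : ℕ} (c : Fin K → ℂ) (a : Fin K → (Fin M → ℂ)) :
    (∑ i, c i • a i) * (∑ i, c i • a i) * star (∑ i, c i • a i)
      = ∑ i, ∑ k, ∑ l, (c i * c k * star (c l)) • (a i * a k * star (a l)) := by
  rw [star_sum]
  rw [Finset.sum_mul_sum]
  rw [Finset.sum_mul]
  refine Finset.sum_congr rfl fun i _ => ?_
  rw [Finset.sum_mul]
  refine Finset.sum_congr rfl fun k _ => ?_
  rw [Finset.mul_sum]
  refine Finset.sum_congr rfl fun l _ => ?_
  rw [star_smul, smul_mul_smul_comm, smul_mul_smul_comm]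

/-- If `S⁽⁰⁾` is positive semidefinite of rank `K`, then the Hadamard product
`S⁽⁰⁾ ⊙ S⁽⁰⁾ ⊙ (S⁽⁰⁾)*` is positive semidefinite of rank at most `K²(K+1)/2`. -/
theorem hadamard_cube_posSemidef_rank_le (M K : ℕ) (S : Matrix (Fin M) (Fin M) ℂ)
    (hS : S.PosSemidef) (hK : S.rank = K) :
    (Matrix.hadamard (Matrix.hadamard S S) (S.map (starRingEnd ℂ))).PosSemidef ∧
    (Matrix.hadamard (Matrix.hadamard S S) (S.map (starRingEnd ℂ))).rank ≤ K ^ 2 * (K + 1) / 2 := by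
  classical
  have hmap : S.map (starRingEnd ℂ) = Sᵀ := by
    ext i j
    rw [Matrix.map_apply, transpose_apply, starRingEnd_apply, ← conjTranspose_apply, hS.1]
  have hpsd : (Matrix.hadamard (Matrix.hadamard S S) (S.map (starRingEnd ℂ))).PosSemidef :=
    aux_schur_psd (aux_schur_psd hS hS) (hmap ▸ hS.transpose)
  refine ⟨hpsd, ?_⟩
  set C := Matrix.hadamard (Matrix.hadamard S S) (S.map (starRingEnd ℂ)) with hC
  set W := Submodule.span ℂ (Set.range Sᵀ) with hWdef
  have hW : Module.finrank ℂ W = K := by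
    exact (Matrix.rank_eq_finrank_span_cols S).symm.trans hK
  let b : Module.Basis (Fin K) ℂ W := Module.finBasisOfFinrankEq ℂ W hW
  let a : Fin K → (Fin M → ℂ) := fun i => (b i : Fin M → ℂ)
  have hspan : Submodule.span ℂ (Set.range a) = W := by
    have h1 : Set.range a = W.subtype '' Set.range b := by
      rw [← Set.range_comp]; rfl
    rw [h1, ← Submodule.map_span, b.span_eq, Submodule.map_top, Submodule.range_subtype]
  let t : Finset ((Fin K × Fin K) × Fin K) :=
    (Finset.univ.filter fun p : Fin K × Fin K => p.1 ≤ p.2) ×ˢ Finset.univ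
  let F : Finset (Fin M → ℂ) := t.image fun q => a q.1.1 * a q.1.2 * star (a q.2)
  have hmemF : ∀ i k l : Fin K,
      a i * a k * star (a l) ∈ Submodule.span ℂ (F : Set (Fin M → ℂ)) := by
    intro i k l
    apply Submodule.subset_span
    rcases le_total i k with h | h
    · exact Finset.mem_coe.mpr (Finset.mem_image.mpr ⟨⟨⟨i, k⟩, l⟩, by simp [t, h], rfl⟩)
    · refine Finset.mem_coe.mpr (Finset.mem_image.mpr ⟨⟨⟨k, i⟩, l⟩, by simp [t, h], ?_⟩)
      rw [mul_comm (a k) (a i)]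
  have hcol : ∀ j, Cᵀ j ∈ Submodule.span ℂ (F : Set (Fin M → ℂ)) := by
    intro j
    have hsj : Sᵀ j ∈ Submodule.span ℂ (Set.range a) := by
      rw [hspan]; exact Submodule.subset_span ⟨j, rfl⟩
    rw [Submodule.mem_span_range_iff_exists_fun] at hsj
    obtain ⟨c, hc⟩ := hsj
    have hCj : Cᵀ j = (∑ i, c i • a i) * (∑ i, c i • a i) * star (∑ i, c i • a i) := by
      rw [hc]
      ext i
      simp [C, hadamard_apply, Matrix.map_apply]
    rw [hCj, aux_expand]
    exact Submodule.sum_mem _ fun i _ => Submodule.sum_mem _ fun k _ =>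
      Submodule.sum_mem _ fun l _ => Submodule.smul_mem _ _ (hmemF i k l)
  have hrankF : C.rank ≤ F.card := by
    have hle : Submodule.span ℂ (Set.range Cᵀ) ≤ Submodule.span ℂ (F : Set (Fin M → ℂ)) :=
      Submodule.span_le.mpr (by rintro _ ⟨j, rfl⟩; exact hcol j)
    calc C.rank = Module.finrank ℂ (Submodule.span ℂ (Set.range Cᵀ)) :=
          Matrix.rank_eq_finrank_span_cols C
      _ ≤ Module.finrank ℂ (Submodule.span ℂ (F : Set (Fin M → ℂ))) :=
          Submodule.finrank_mono hle
      _ ≤ F.card := finrank_span_finset_le_card F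
  have hfc : (Finset.univ.filter fun p : Fin K × Fin K => p.1 ≤ p.2).card = (K + 1) * K / 2 := by
    rw [← Fintype.card_subtype]
    rw [← Fintype.card_congr (Sym2.sortEquiv (α := Fin K))]
    rw [Sym2.card, Fintype.card_fin, Nat.choose_two_right]
    simp
  have htcard : t.card = ((K + 1) * K / 2) * K := by
    rw [Finset.card_product, hfc, Finset.card_univ, Fintype.card_fin]
  have hdiv : ((K + 1) * K / 2) * 2 = (K + 1) * K :=
    Nat.div_mul_cancel (by rw [mul_comm]; exact (Nat.even_mul_succ_self K).two_dvd)
  have hfinal : ((K + 1) * K / 2) * K = K ^ 2 * (K + 1) / 2 := by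
    have h1 : K ^ 2 * (K + 1) = (((K + 1) * K / 2) * K) * 2 := by
      rw [pow_two]
      calc K * K * (K + 1) = ((K + 1) * K / 2) * 2 * K := by rw [hdiv]; ring
        _ = ((K + 1) * K / 2) * K * 2 := by ring
    omega
  calc C.rank ≤ F.card := hrankF
    _ ≤ t.card := Finset.card_image_le
    _ = ((K + 1) * K / 2) * K := htcard
    _ = K ^ 2 * (K + 1) / 2 := hfinal
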